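/- arXiv:1201.6152 — 2 statements merged into one kernel-verified Lean document; each statement's English description precedes it below -/
import Mathlib

section
/- Let p > 2 be a prime and let a, b be integers with a > 0, b ≥ 0 and gcd(a, p) = 1, and let r₀ ∈ {0, 1, ..., p-1} satisfy a·r₀ + b ≡ 0 (mod p). Then ∑_{k=1}^{p-1} q^{bk}/[ak]_q^3 ≡ (1-q)^3·( −(p-1)(p-3)/8 − r₀·(p² − 9p + 12 − 3r₀(p-3) + 2r₀²)/12 ) (mod [p]_q). -/
open Polynomial Finset
noncomputable section
set_option linter.unusedSectionVars false

namespace QH3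

variable {K : Type*} [Field K] [CharZero K]

lemma sum_id (n : ℕ) : ∑ d ∈ range n, (d : K) = (n : K) * ((n : K) - 1) / 2 := by
  induction n with
  | zero => simp
  | succ n ih => rw [Finset.sum_range_succ, ih]; push_cast; ring

lemma sum_sq (n : ℕ) :
    ∑ d ∈ range n, (d : K) ^ 2 = (n : K) * ((n : K) - 1) * (2 * (n : K) - 1) / 6 := by
  induction n with
  | zero => simp
  | succ n ih => rw [Finset.sum_range_succ, ih]; push_cast; ring

lemma sum_cu (n : ℕ) :
    ∑ d ∈ range n, (d : K) ^ 3 = (n : K) ^ 2 * ((n : K) - 1) ^ 2 / 4 := by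
  induction n with
  | zero => simp
  | succ n ih => rw [Finset.sum_range_succ, ih]; push_cast; ring

lemma sum_poly (n : ℕ) (α β γ δ : K) :
    ∑ d ∈ range n, (α + β * (d : K) + γ * (d : K) ^ 2 + δ * (d : K) ^ 3)
      = (n : K) * α + β * ((n : K) * ((n : K) - 1) / 2)
        + γ * ((n : K) * ((n : K) - 1) * (2 * (n : K) - 1) / 6)
        + δ * ((n : K) ^ 2 * ((n : K) - 1) ^ 2 / 4) := by
  rw [Finset.sum_add_distrib, Finset.sum_add_distrib, Finset.sum_add_distrib,
    ← Finset.mul_sum, ← Finset.mul_sum, ← Finset.mul_sum, Finset.sum_const,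
    sum_id, sum_sq, sum_cu]
  simp [nsmul_eq_mul, mul_comm]

variable {p : ℕ} {ζ : K} (hp : p.Prime) (hp2 : 2 < p) (hζ : IsPrimitiveRoot ζ p)

lemma sum_range_split (f : ℕ → K) (hp0 : 0 < p) :
    ∑ j ∈ range p, f j = f 0 + ∑ j ∈ Icc 1 (p - 1), f j := by
  have h : range p = insert 0 (Icc 1 (p - 1)) := by
    ext x; simp only [Finset.mem_range, Finset.mem_insert, Finset.mem_Icc]; omega
  rw [h, Finset.sum_insert (by simp)]

lemma not_dvd_of_Icc {j : ℕ} (hpp : 0 < p) (hj : j ∈ Icc 1 (p - 1)) : ¬ p ∣ j := by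
  simp only [Finset.mem_Icc] at hj
  rintro ⟨c, rfl⟩
  rcases Nat.eq_zero_or_pos c with rfl | hc
  · omega
  · have h2 : p ≤ p * c := Nat.le_mul_of_pos_right p hc
    omega

include hζ

lemma zpow_mod (n : ℕ) : ζ ^ n = ζ ^ (n % p) := by
  conv_lhs => rw [← Nat.div_add_mod n p]
  rw [pow_add, pow_mul, hζ.pow_eq_one, one_pow, one_mul]

lemma zpow_ne_one {j : ℕ} (hj : ¬ p ∣ j) : ζ ^ j ≠ 1 :=
  fun h => hj ((hζ.pow_eq_one_iff_dvd j).mp h)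

lemma one_sub_zpow_ne {j : ℕ} (hj : ¬ p ∣ j) : (1 : K) - ζ ^ j ≠ 0 := by
  intro h
  exact zpow_ne_one hζ hj (by linear_combination -h)

lemma geo_sum {c : ℕ} (hc : ¬ p ∣ c) : ∑ j ∈ range p, ζ ^ (c * j) = 0 := by
  have h1 : ζ ^ c ≠ 1 := zpow_ne_one hζ hc
  have h : ∑ j ∈ range p, (ζ ^ c) ^ j = ((ζ ^ c) ^ p - 1) / (ζ ^ c - 1) :=
    geom_sum_eq h1 p
  rw [← pow_mul, mul_comm c p, pow_mul, hζ.pow_eq_one, one_pow, sub_self, zero_div] at h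
  calc ∑ j ∈ range p, ζ ^ (c * j) = ∑ j ∈ range p, (ζ ^ c) ^ j := by
        refine Finset.sum_congr rfl fun j _ => ?_; rw [← pow_mul]
    _ = 0 := h

include hp

lemma geo_sum' {c : ℕ} (hc : ¬ p ∣ c) : ∑ j ∈ Icc 1 (p - 1), ζ ^ (c * j) = -1 := by
  have h := geo_sum hζ hc
  rw [sum_range_split (fun j => ζ ^ (c * j)) hp.pos] at h
  simp only [Nat.mul_zero, pow_zero] at h
  linear_combination h

def T (ζ : K) (p t c : ℕ) : K := ∑ j ∈ Icc 1 (p - 1), ζ ^ (c * j) / (1 - ζ ^ j) ^ t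

lemma T_zero {c : ℕ} (hc : ¬ p ∣ c) : T ζ p 0 c = -1 := by
  simp only [T, pow_zero, div_one]
  exact geo_sum' hp hζ hc

lemma T_rec (t c : ℕ) : T ζ p (t + 1) (c + 1) = T ζ p (t + 1) c - T ζ p t c := by
  simp only [T, ← Finset.sum_sub_distrib]
  refine Finset.sum_congr rfl fun j hj => ?_
  have hne : (1 : K) - ζ ^ j ≠ 0 := one_sub_zpow_ne hζ (not_dvd_of_Icc hp.pos hj)
  rw [show (c + 1) * j = c * j + j from by ring, pow_add]
  field_simp
  ring

omit hp in
lemma T_period (t : ℕ) : T ζ p t p = T ζ p t 0 := by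
  simp only [T]
  refine Finset.sum_congr rfl fun j hj => ?_
  rw [zpow_mod hζ (p * j), Nat.mul_mod_right, Nat.zero_mul, pow_zero]

lemma T_total (t : ℕ) : ∑ c ∈ Icc 1 p, T ζ p t c = 0 := by
  have key : ∑ c ∈ range p, T ζ p t c = 0 := by
    simp only [T]
    rw [Finset.sum_comm]
    refine Finset.sum_eq_zero fun j hj => ?_
    rw [← Finset.sum_div]
    have h : ∑ c ∈ range p, ζ ^ (c * j) = 0 := by
      have h2 := geo_sum hζ (not_dvd_of_Icc hp.pos hj)
      calc ∑ c ∈ range p, ζ ^ (c * j) = ∑ c ∈ range p, ζ ^ (j * c) := by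
            refine Finset.sum_congr rfl fun c _ => ?_; rw [mul_comm]
        _ = 0 := h2
    rw [h, zero_div]
  rw [sum_range_split (fun c => T ζ p t c) hp.pos] at key
  have h1 : 1 ≤ p := hp.pos
  have hIcc : Icc 1 p = insert p (Icc 1 (p - 1)) := by
    ext x; simp only [Finset.mem_Icc, Finset.mem_insert]; omega
  rw [hIcc, Finset.sum_insert (by simp only [Finset.mem_Icc]; omega), T_period hζ]
  linear_combination key


omit hp hζ in
lemma mem_Icc_aux {c : ℕ} (hp0 : 0 < p) (h1 : 1 ≤ c) (h2 : c + 1 ≤ p) : c ∈ Icc 1 (p - 1) :=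
  Finset.mem_Icc.mpr ⟨h1, by omega⟩

lemma T1_step : ∀ c, 1 ≤ c → c ≤ p → T ζ p 1 c = T ζ p 1 1 + ((c : K) - 1) := by
  intro c hc1 hcp
  induction c, hc1 using Nat.le_induction with
  | base => simp
  | succ c hc ih =>
    rw [T_rec hp hζ 0 c, ih (by omega),
      T_zero hp hζ (not_dvd_of_Icc hp.pos (mem_Icc_aux hp.pos hc hcp))]
    push_cast; ring

omit hζ in
lemma hpK : (p : K) ≠ 0 := Nat.cast_ne_zero.mpr hp.pos.ne'

omit hp hζ in
lemma sum_shape (F : ℕ → K) (A β γ δ : K)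
    (hstep : ∀ c, 1 ≤ c → c ≤ p → F c = A + β * ((c:K)-1) + γ * ((c:K)-1)^2 + δ * ((c:K)-1)^3)
    (htot : ∑ c ∈ Icc 1 p, F c = 0) :
    (p : K) * A + β * ((p : K) * ((p : K) - 1) / 2)
        + γ * ((p : K) * ((p : K) - 1) * (2 * (p : K) - 1) / 6)
        + δ * ((p : K) ^ 2 * ((p : K) - 1) ^ 2 / 4) = 0 := by
  have h : ∑ c ∈ Icc 1 p, F c
      = ∑ d ∈ range p, (A + β * (d : K) + γ * (d : K) ^ 2 + δ * (d : K) ^ 3) := by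
    rw [← Finset.Ico_add_one_right_eq_Icc, Finset.sum_Ico_eq_sum_range, show p + 1 - 1 = p from rfl]
    refine Finset.sum_congr rfl fun d hd => ?_
    rw [hstep (1 + d) (by omega) (by simp only [Finset.mem_range] at hd; omega)]
    push_cast; ring
  rw [h, sum_poly] at htot
  exact htot

lemma T1_eq : ∀ c, 1 ≤ c → c ≤ p → T ζ p 1 c = (c : K) - ((p : K) + 1) / 2 := by
  have hS := sum_shape (F := fun c => T ζ p 1 c) (A := T ζ p 1 1) 1 0 0
    (fun c h1 h2 => by simp only [T1_step hp hζ c h1 h2]; ring) (T_total hp hζ 1)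
  have hT11 : T ζ p 1 1 = -(((p : K)) - 1) / 2 := by
    refine mul_left_cancel₀ (hpK hp) ?_
    linear_combination hS
  intro c h1 h2
  rw [T1_step hp hζ c h1 h2, hT11]; ring

lemma T2_step : ∀ c, 1 ≤ c → c ≤ p →
    T ζ p 2 c = T ζ p 2 1 - ((c:K)-1) * ((c:K)-(p:K)-1) / 2 := by
  intro c hc1 hcp
  induction c, hc1 using Nat.le_induction with
  | base => simp
  | succ c hc ih =>
    rw [T_rec hp hζ 1 c, ih (by omega), T1_eq hp hζ c hc (by omega)]
    push_cast; ring

lemma T2_eq : ∀ c, 1 ≤ c → c ≤ p →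
    T ζ p 2 c = -(((p:K))^2 - 1) / 12 - ((c:K)-1) * ((c:K)-(p:K)-1) / 2 := by
  have hS := sum_shape (F := fun c => T ζ p 2 c) (A := T ζ p 2 1)
    ((p:K)/2) (-(1/2 : K)) 0
    (fun c h1 h2 => by simp only [T2_step hp hζ c h1 h2]; ring) (T_total hp hζ 2)
  have hT21 : T ζ p 2 1 = -(((p : K))^2 - 1) / 12 := by
    refine mul_left_cancel₀ (hpK hp) ?_
    linear_combination hS
  intro c h1 h2
  rw [T2_step hp hζ c h1 h2, hT21]

lemma T3_step : ∀ c, 1 ≤ c → c ≤ p →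
    T ζ p 3 c = T ζ p 3 1 + ((c:K)-1) * ((p:K)^2-1) / 12
      + ((c:K)-1) * ((c:K)-2) * (2*(c:K)-3-3*(p:K)) / 12 := by
  intro c hc1 hcp
  induction c, hc1 using Nat.le_induction with
  | base => simp
  | succ c hc ih =>
    rw [T_rec hp hζ 2 c, ih (by omega), T2_eq hp hζ c hc (by omega)]
    push_cast; ring

lemma T3_eq : ∀ c, 1 ≤ c → c ≤ p →
    T ζ p 3 c = -(((p:K))^2 - 1) / 24 + ((c:K)-1) * ((p:K)^2-1) / 12
      + ((c:K)-1) * ((c:K)-2) * (2*(c:K)-3-3*(p:K)) / 12 := by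
  have hS := sum_shape (F := fun c => T ζ p 3 c) (A := T ζ p 3 1)
    (((p:K)^2 + 3*(p:K))/12) (-(((p:K)+1)/4)) (1/6 : K)
    (fun c h1 h2 => by simp only [T3_step hp hζ c h1 h2]; ring) (T_total hp hζ 3)
  have hT31 : T ζ p 3 1 = -(((p : K))^2 - 1) / 24 := by
    refine mul_left_cancel₀ (hpK hp) ?_
    linear_combination hS
  intro c h1 h2
  rw [T3_step hp hζ c h1 h2, hT31]



omit hζ in
lemma p_not_dvd {a : ℕ} (hap : Nat.gcd a p = 1) : ¬ p ∣ a := by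
  intro h
  have h2 : p ∣ Nat.gcd a p := Nat.dvd_gcd h dvd_rfl
  rw [hap] at h2
  have := Nat.le_of_dvd one_pos h2
  have := hp.two_le
  omega

omit hζ in
lemma not_p_dvd_mul {a k : ℕ} (hpa : ¬ p ∣ a) (hk : k ∈ Icc 1 (p - 1)) :
    ¬ p ∣ a * k := by
  intro h
  rcases (Nat.Prime.dvd_mul hp).mp h with h' | h'
  · exact hpa h'
  · exact not_dvd_of_Icc hp.pos hk h'

omit hζ in
lemma mod_mem_Icc {x : ℕ} (hx : ¬ p ∣ x) : x % p ∈ Icc 1 (p - 1) := by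
  have h1 : x % p < p := Nat.mod_lt _ hp.pos
  have h2 : x % p ≠ 0 := fun h => hx (Nat.dvd_of_mod_eq_zero h)
  exact Finset.mem_Icc.mpr ⟨by omega, by omega⟩

lemma reindex {a b r₀ : ℕ} (hap : Nat.gcd a p = 1) (hr₀ : r₀ < p)
    (hr : (a * r₀ + b) % p = 0) :
    ∑ k ∈ Icc 1 (p - 1), ζ ^ (b * k) / (1 - ζ ^ (a * k)) ^ 3 = T ζ p 3 (p - r₀) := by
  haveI : NeZero p := ⟨hp.pos.ne'⟩
  have hpa : ¬ p ∣ a := p_not_dvd hp hap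
  have ha0 : (a : ZMod p) ≠ 0 := by
    rw [Ne, ZMod.natCast_eq_zero_iff]; exact hpa
  obtain ⟨a', hma⟩ : ∃ a', a * a' ≡ 1 [MOD p] := by
    refine ⟨((a : ZMod p)⁻¹).val, ?_⟩
    haveI : Fact p.Prime := ⟨hp⟩
    have h9 : (a : ZMod p) * (a : ZMod p)⁻¹ = 1 :=
      ZMod.mul_inv_of_unit _ (isUnit_iff_ne_zero.mpr ha0)
    rw [← ZMod.natCast_eq_natCast_iff, Nat.cast_mul, Nat.cast_one,
      ZMod.natCast_zmod_val, h9]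
  have hpa' : ¬ p ∣ a' := by
    intro h
    have h0 : p ∣ a * a' := Dvd.dvd.mul_left h a
    have h1 : a * a' ≡ 0 [MOD p] := (Nat.modEq_zero_iff_dvd).mpr h0
    have h2 : (1 : ℕ) ≡ 0 [MOD p] := hma.symm.trans h1
    have h3 : p ∣ 1 := (Nat.modEq_zero_iff_dvd).mp h2
    have h4 := Nat.le_of_dvd one_pos h3
    have h5 := hp.two_le
    omega
  have hps : ((p : ℕ) : ZMod p) = 0 := ZMod.natCast_self p
  have hb : ((a : ZMod p)) * (r₀ : ZMod p) + (b : ZMod p) = 0 := by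
    have := Nat.dvd_of_mod_eq_zero hr
    have h1 : ((a * r₀ + b : ℕ) : ZMod p) = 0 :=
      (ZMod.natCast_eq_zero_iff _ _).mpr this
    push_cast at h1
    exact h1
  rw [T]
  refine Finset.sum_nbij' (i := fun k => (a * k) % p) (j := fun l => (a' * l) % p)
    ?_ ?_ ?_ ?_ ?_
  · intro k hk
    exact mod_mem_Icc hp (not_p_dvd_mul hp hpa hk)
  · intro l hl
    exact mod_mem_Icc hp (not_p_dvd_mul hp hpa' hl)
  · intro k hk
    simp only [Finset.mem_Icc] at hk
    have h1 : a' * ((a * k) % p) ≡ a' * (a * k) [MOD p] :=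
      Nat.ModEq.mul_left a' (Nat.mod_modEq _ p)
    have h2 : a' * (a * k) = (a * a') * k := by ring
    have h3 : (a * a') * k ≡ 1 * k [MOD p] := Nat.ModEq.mul_right k hma
    have h4 : a' * ((a * k) % p) ≡ k [MOD p] := by
      rw [one_mul] at h3
      exact (h1.trans (h2 ▸ h3))
    have h5 : a' * ((a * k) % p) % p = k % p := h4
    rwa [Nat.mod_eq_of_lt (show k < p by omega)] at h5
  · intro l hl
    simp only [Finset.mem_Icc] at hl
    have h1 : a * ((a' * l) % p) ≡ a * (a' * l) [MOD p] :=
      Nat.ModEq.mul_left a (Nat.mod_modEq _ p)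
    have h2 : a * (a' * l) = (a * a') * l := by ring
    have h3 : (a * a') * l ≡ 1 * l [MOD p] := Nat.ModEq.mul_right l hma
    have h4 : a * ((a' * l) % p) ≡ l [MOD p] := by
      rw [one_mul] at h3
      exact (h1.trans (h2 ▸ h3))
    have h5 : a * ((a' * l) % p) % p = l % p := h4
    rwa [Nat.mod_eq_of_lt (show l < p by omega)] at h5
  · intro k hk
    have hden : ζ ^ (a * k) = ζ ^ ((a * k) % p) := zpow_mod hζ _
    have hnum : ζ ^ (b * k) = ζ ^ ((p - r₀) * ((a * k) % p)) := by
      rw [zpow_mod hζ (b * k), zpow_mod hζ ((p - r₀) * _)]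
      have hcong : b * k ≡ (p - r₀) * ((a * k) % p) [MOD p] := by
        rw [← ZMod.natCast_eq_natCast_iff]
        push_cast [ZMod.natCast_mod, Nat.cast_sub hr₀.le]
        linear_combination ((k : ZMod p)) * hb + (-(a : ZMod p) * (k : ZMod p)) * hps
      have h6 : (b * k) % p = ((p - r₀) * ((a * k) % p)) % p := hcong
      rw [h6]
    rw [hden, hnum]


lemma key_eval {r₀ : ℕ} (hr₀ : r₀ < p) :
    T ζ p 3 (p - r₀)
      = ((-(((p : ℚ) - 1) * ((p : ℚ) - 3)) / 8 -
          (r₀ : ℚ) * ((p : ℚ) ^ 2 - 9 * (p : ℚ) + 12 - 3 * (r₀ : ℚ) * ((p : ℚ) - 3)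
            + 2 * (r₀ : ℚ) ^ 2) / 12 : ℚ) : K) := by
  have h2 := hp.two_le
  rw [T3_eq hp hζ (p - r₀) (by omega) (by omega)]
  have hc : ((p - r₀ : ℕ) : K) = (p : K) - (r₀ : K) := by
    push_cast [Nat.cast_sub hr₀.le]; ring
  rw [hc]
  push_cast
  ring


lemma aeval_key {a b : ℕ} (ha : 0 < a) (hpa : ¬ p ∣ a) (c : K)
    (hc : ∑ k ∈ Icc 1 (p - 1), ζ ^ (b * k) / (1 - ζ ^ (a * k)) ^ 3 = c) :
    ∑ k ∈ Icc 1 (p - 1),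
        ζ ^ (b * k) * ∏ l ∈ (Icc 1 (p - 1)).erase k, (∑ i ∈ range (a * l), ζ ^ i) ^ 3
      = (1 - ζ) ^ 3 * c *
        ∏ l ∈ Icc 1 (p - 1), (∑ i ∈ range (a * l), ζ ^ i) ^ 3 := by
  have hp2 := hp.two_le
  have hw : (1 : K) - ζ ≠ 0 := by
    have := one_sub_zpow_ne hζ (j := 1) (by
      intro h; have := Nat.le_of_dvd one_pos h; omega)
    simpa using this
  have hu : ∀ l ∈ Icc 1 (p - 1), (1 : K) - ζ ^ (a * l) ≠ 0 := fun l hl =>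
    one_sub_zpow_ne hζ (not_p_dvd_mul hp hpa hl)
  have hE : ∀ l ∈ Icc 1 (p - 1),
      (∑ i ∈ range (a * l), ζ ^ i) = (1 - ζ ^ (a * l)) / (1 - ζ) := by
    intro l hl
    rw [eq_div_iff hw]
    have := geom_sum_mul (ζ : K) (a * l)
    linear_combination -this
  have hcard : (Icc 1 (p - 1)).card = p - 1 := by
    rw [Nat.card_Icc]; omega
  have key2 : ∑ k ∈ Icc 1 (p - 1), ζ ^ (b * k) *
        ∏ l ∈ (Icc 1 (p - 1)).erase k, (1 - ζ ^ (a * l)) ^ 3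
      = c * ∏ l ∈ Icc 1 (p - 1), (1 - ζ ^ (a * l)) ^ 3 := by
    rw [← hc, Finset.sum_mul]
    refine Finset.sum_congr rfl fun k hk => ?_
    rw [← Finset.mul_prod_erase _ (fun l => (1 - ζ ^ (a * l)) ^ 3) hk]
    have h1 : ((1 : K) - ζ ^ (a * k)) ^ 3 ≠ 0 := pow_ne_zero _ (hu k hk)
    rw [div_mul_eq_mul_div, eq_div_iff h1]
    ring
  have hErase : ∀ k ∈ Icc 1 (p - 1),
      ∏ l ∈ (Icc 1 (p - 1)).erase k, (∑ i ∈ range (a * l), ζ ^ i) ^ 3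
        = (∏ l ∈ (Icc 1 (p - 1)).erase k, (1 - ζ ^ (a * l)) ^ 3)
            / (((1 - ζ) ^ 3) ^ (p - 2)) := by
    intro k hk
    calc ∏ l ∈ (Icc 1 (p - 1)).erase k, (∑ i ∈ range (a * l), ζ ^ i) ^ 3
        = ∏ l ∈ (Icc 1 (p - 1)).erase k, ((1 - ζ ^ (a * l)) ^ 3 / (1 - ζ) ^ 3) :=
          Finset.prod_congr rfl fun l hl => by
            rw [hE l (Finset.mem_of_mem_erase hl), div_pow]
      _ = (∏ l ∈ (Icc 1 (p - 1)).erase k, (1 - ζ ^ (a * l)) ^ 3)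
            / (∏ l ∈ (Icc 1 (p - 1)).erase k, ((1 : K) - ζ) ^ 3) :=
          Finset.prod_div_distrib _ _
      _ = _ := by rw [Finset.prod_const, Finset.card_erase_of_mem hk, hcard,
            show p - 1 - 1 = p - 2 from by omega]
  have hFull :
      ∏ l ∈ Icc 1 (p - 1), (∑ i ∈ range (a * l), ζ ^ i) ^ 3
        = (∏ l ∈ Icc 1 (p - 1), (1 - ζ ^ (a * l)) ^ 3)
            / (((1 - ζ) ^ 3) ^ (p - 1)) := by
    calc ∏ l ∈ Icc 1 (p - 1), (∑ i ∈ range (a * l), ζ ^ i) ^ 3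
        = ∏ l ∈ Icc 1 (p - 1), ((1 - ζ ^ (a * l)) ^ 3 / (1 - ζ) ^ 3) :=
          Finset.prod_congr rfl fun l hl => by rw [hE l hl, div_pow]
      _ = (∏ l ∈ Icc 1 (p - 1), (1 - ζ ^ (a * l)) ^ 3)
            / (∏ l ∈ Icc 1 (p - 1), ((1 : K) - ζ) ^ 3) :=
          Finset.prod_div_distrib _ _
      _ = _ := by rw [Finset.prod_const, hcard]
  have hw3 : ((1 : K) - ζ) ^ 3 ≠ 0 := pow_ne_zero _ hw
  have hwe : (((1 : K) - ζ) ^ 3) ^ (p - 1) = (((1 - ζ) ^ 3) ^ (p - 2)) * (1 - ζ) ^ 3 := by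
    rw [← pow_succ, show p - 2 + 1 = p - 1 from by omega]
  calc ∑ k ∈ Icc 1 (p - 1),
        ζ ^ (b * k) * ∏ l ∈ (Icc 1 (p - 1)).erase k, (∑ i ∈ range (a * l), ζ ^ i) ^ 3
      = (∑ k ∈ Icc 1 (p - 1), ζ ^ (b * k) *
          ∏ l ∈ (Icc 1 (p - 1)).erase k, (1 - ζ ^ (a * l)) ^ 3) / ((1 - ζ) ^ 3) ^ (p - 2) := by
        rw [Finset.sum_div]
        exact Finset.sum_congr rfl fun k hk => by rw [hErase k hk, mul_div_assoc]
    _ = (c * ∏ l ∈ Icc 1 (p - 1), (1 - ζ ^ (a * l)) ^ 3) / ((1 - ζ) ^ 3) ^ (p - 2) := by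
        rw [key2]
    _ = (1 - ζ) ^ 3 * c *
          ∏ l ∈ Icc 1 (p - 1), (∑ i ∈ range (a * l), ζ ^ i) ^ 3 := by
        rw [hFull, hwe]
        have h2 : (((1 : K) - ζ) ^ 3) ^ (p - 2) ≠ 0 := pow_ne_zero _ hw3
        field_simp

end QH3

open Polynomial Finset

noncomputable section

/-- The `q`-integer `[n]_q = 1 + q + ⋯ + q^(n-1)`, as a polynomial in `ℚ[q]`. -/
def qIntP (n : ℕ) : Polynomial ℚ := ∑ i ∈ Finset.range n, X ^ i

/-- The `q`-integer `[n]_q` viewed in the field of rational functions `ℚ(q)`. -/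
def qN (n : ℕ) : RatFunc ℚ := algebraMap (Polynomial ℚ) (RatFunc ℚ) (qIntP n)

/-- The `q`-Pochhammer symbol `(q; q)_n = ∏_{j=1}^{n} (1 - q^j)` in `ℚ(q)`. -/
def qqPoch (n : ℕ) : RatFunc ℚ :=
  algebraMap (Polynomial ℚ) (RatFunc ℚ) (∏ j ∈ Finset.range n, (1 - X ^ (j + 1)))

/-- The `q`-Pochhammer symbol `(-q; q)_n = ∏_{j=1}^{n} (1 + q^j)` in `ℚ(q)`. -/
def nqPoch (n : ℕ) : RatFunc ℚ :=
  algebraMap (Polynomial ℚ) (RatFunc ℚ) (∏ j ∈ Finset.range n, (1 + X ^ (j + 1)))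

/-- The Gaussian `q`-binomial coefficient, as a rational function. -/
def qbin (n k : ℕ) : RatFunc ℚ :=
  if k ≤ n then qqPoch n / (qqPoch k * qqPoch (n - k)) else 0

/-- `qCong p r x y` means `x ≡ y (mod [p]_q^r)`: the difference `x - y` can be
written as a fraction whose numerator (a polynomial) is divisible by `[p]_q^r`
and whose denominator is relatively prime to `[p]_q`. -/
def qCong (p r : ℕ) (x y : RatFunc ℚ) : Prop :=
  ∃ a b : Polynomial ℚ, IsCoprime b (qIntP p) ∧
    (x - y) * algebraMap (Polynomial ℚ) (RatFunc ℚ) b =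
      algebraMap (Polynomial ℚ) (RatFunc ℚ) (qIntP p ^ r * a)

lemma qIntP_ne_zero' {m : ℕ} (hm : 0 < m) : qIntP m ≠ 0 := by
  intro h
  have h1 : Polynomial.eval 1 (qIntP m) = (m : ℚ) := by
    simp [qIntP, Polynomial.eval_finset_sum]
  rw [h] at h1
  simp only [Polynomial.eval_zero] at h1
  have h2 : m = 0 := by exact_mod_cast h1.symm
  omega

lemma aeval_qIntP' {K : Type*} [Field K] [Algebra ℚ K] (ζ : K) (m : ℕ) :
    Polynomial.aeval ζ (qIntP m) = ∑ i ∈ range m, ζ ^ i := by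
  simp [qIntP, map_sum]

/-- For a prime `p > 2`, integers `a > 0`, `b ≥ 0` with `gcd(a,p) = 1` and
`r₀ ∈ {0,…,p-1}` with `a r₀ + b ≡ 0 (mod p)`:
`∑_{k=1}^{p-1} q^{bk}/[ak]_q³ ≡
  (1-q)³(−(p-1)(p-3)/8 − r₀(p²-9p+12-3r₀(p-3)+2r₀²)/12) (mod [p]_q)`. -/
theorem qHarmonic_d3 (p a b : ℕ) (hp : p.Prime) (hp2 : 2 < p)
    (ha : 0 < a) (hap : Nat.gcd a p = 1)
    (r₀ : ℕ) (hr₀ : r₀ < p) (hr : (a * r₀ + b) % p = 0) :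
    qCong p 1
      (∑ k ∈ Finset.Icc 1 (p - 1), (RatFunc.X : RatFunc ℚ) ^ (b * k) / qN (a * k) ^ 3)
      ((1 - RatFunc.X) ^ 3 *
        RatFunc.C (-(((p : ℚ) - 1) * ((p : ℚ) - 3)) / 8 -
          (r₀ : ℚ) * ((p : ℚ) ^ 2 - 9 * (p : ℚ) + 12 - 3 * (r₀ : ℚ) * ((p : ℚ) - 3)
            + 2 * (r₀ : ℚ) ^ 2) / 12)) := by
  haveI : Fact p.Prime := ⟨hp⟩
  set cq : ℚ := -(((p : ℚ) - 1) * ((p : ℚ) - 3)) / 8 -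
      (r₀ : ℚ) * ((p : ℚ) ^ 2 - 9 * (p : ℚ) + 12 - 3 * (r₀ : ℚ) * ((p : ℚ) - 3)
        + 2 * (r₀ : ℚ) ^ 2) / 12 with hcq
  set n : ℕ+ := ⟨p, hp.pos⟩ with hn
  set K := CyclotomicField n ℚ with hK
  haveI : IsCyclotomicExtension {(n:ℕ)} ℚ K := CyclotomicField.isCyclotomicExtension (n:ℕ) ℚ
  set ζ : K := IsCyclotomicExtension.zeta n ℚ K with hζdef
  have hζ : IsPrimitiveRoot ζ p := IsCyclotomicExtension.zeta_spec n ℚ K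
  have hpa : ¬ p ∣ a := QH3.p_not_dvd hp hap
  have hkey : ∑ k ∈ Icc 1 (p - 1), ζ ^ (b * k) / (1 - ζ ^ (a * k)) ^ 3 = ((cq : ℚ) : K) := by
    rw [QH3.reindex hp hζ hap hr₀ hr, QH3.key_eval hp hζ hr₀]
  set Bp : Polynomial ℚ := ∏ k ∈ Icc 1 (p - 1), qIntP (a * k) ^ 3 with hBp
  set Np : Polynomial ℚ := ∑ k ∈ Icc 1 (p - 1),
      X ^ (b * k) * ∏ l ∈ (Icc 1 (p - 1)).erase k, qIntP (a * l) ^ 3 with hNp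
  -- nonvanishing of aeval of Bp
  have hw : (1 : K) - ζ ≠ 0 := by
    have h := QH3.one_sub_zpow_ne hζ (j := 1) (by
      intro h; have := Nat.le_of_dvd one_pos h; omega)
    simpa using h
  have hEne : ∀ l ∈ Icc 1 (p - 1), (∑ i ∈ range (a * l), ζ ^ i) ≠ 0 := by
    intro l hl
    have hu : (1 : K) - ζ ^ (a * l) ≠ 0 :=
      QH3.one_sub_zpow_ne hζ (QH3.not_p_dvd_mul hp hpa hl)
    have hE : (∑ i ∈ range (a * l), ζ ^ i) = (1 - ζ ^ (a * l)) / (1 - ζ) := by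
      rw [eq_div_iff hw]
      have := geom_sum_mul (ζ : K) (a * l)
      linear_combination -this
    rw [hE]
    exact div_ne_zero hu hw
  have haevalB : Polynomial.aeval ζ Bp ≠ 0 := by
    rw [hBp, map_prod]
    rw [Finset.prod_ne_zero_iff]
    intro l hl
    rw [map_pow, aeval_qIntP']
    exact pow_ne_zero _ (hEne l hl)
  -- aeval of the numerator-difference vanishes
  have haevalM : Polynomial.aeval ζ (Np - (1 - X) ^ 3 * Polynomial.C cq * Bp) = 0 := by
    rw [map_sub, sub_eq_zero]
    have hNev : Polynomial.aeval ζ Np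
        = ∑ k ∈ Icc 1 (p - 1),
            ζ ^ (b * k) * ∏ l ∈ (Icc 1 (p - 1)).erase k, (∑ i ∈ range (a * l), ζ ^ i) ^ 3 := by
      rw [hNp, map_sum]
      refine Finset.sum_congr rfl fun k hk => ?_
      rw [map_mul, map_pow, aeval_X, map_prod]
      refine congrArg _ (Finset.prod_congr rfl fun l hl => ?_)
      rw [map_pow, aeval_qIntP']
    have hBev : Polynomial.aeval ζ ((1 - X) ^ 3 * Polynomial.C cq * Bp)
        = (1 - ζ) ^ 3 * ((cq : ℚ) : K) *
            ∏ l ∈ Icc 1 (p - 1), (∑ i ∈ range (a * l), ζ ^ i) ^ 3 := by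
      rw [map_mul, map_mul, map_pow, map_sub, map_one, aeval_X, aeval_C, hBp, map_prod]
      have hcast : algebraMap ℚ K cq = ((cq : ℚ) : K) := eq_ratCast (algebraMap ℚ K) cq
      rw [hcast]
      refine congrArg _ (Finset.prod_congr rfl fun l hl => ?_)
      rw [map_pow, aeval_qIntP']
    rw [hNev, hBev]
    exact QH3.aeval_key hp hζ ha hpa _ hkey
  have hcyc : qIntP p = Polynomial.cyclotomic p ℚ := by
    rw [Polynomial.cyclotomic_prime ℚ p, qIntP]
  have hmin : qIntP p = minpoly ℚ ζ := by
    rw [hcyc, Polynomial.cyclotomic_eq_minpoly_rat hζ hp.pos]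
  have hdvd : qIntP p ∣ (Np - (1 - X) ^ 3 * Polynomial.C cq * Bp) := by
    rw [hmin]
    exact minpoly.dvd ℚ ζ haevalM
  obtain ⟨A, hA⟩ := hdvd
  have hirr : Irreducible (qIntP p) := by
    rw [hcyc]; exact Polynomial.cyclotomic.irreducible_rat hp.pos
  have hnd : ¬ qIntP p ∣ Bp := by
    rintro ⟨d, hd⟩
    apply haevalB
    rw [hd, map_mul, hmin, minpoly.aeval, zero_mul]
  refine ⟨A, Bp, (hirr.coprime_iff_not_dvd.mpr hnd).symm, ?_⟩
  rw [pow_one, sub_mul]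
  have h1 : (∑ k ∈ Finset.Icc 1 (p - 1),
        (RatFunc.X : RatFunc ℚ) ^ (b * k) / qN (a * k) ^ 3) *
        algebraMap (Polynomial ℚ) (RatFunc ℚ) Bp
      = algebraMap (Polynomial ℚ) (RatFunc ℚ) Np := by
    rw [hNp, Finset.sum_mul, map_sum]
    refine Finset.sum_congr rfl fun k hk => ?_
    have hsplit : Bp = qIntP (a * k) ^ 3 * ∏ l ∈ (Icc 1 (p - 1)).erase k, qIntP (a * l) ^ 3 :=
      (Finset.mul_prod_erase _ _ hk).symm
    have hk1 : 1 ≤ k := (Finset.mem_Icc.mp hk).1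
    have hden : algebraMap (Polynomial ℚ) (RatFunc ℚ) (qIntP (a * k)) ≠ 0 :=
      RatFunc.algebraMap_ne_zero (qIntP_ne_zero' (Nat.mul_pos ha hk1))
    rw [hsplit, map_mul, map_mul, map_pow, map_pow, RatFunc.algebraMap_X, qN]
    field_simp
  have h2 : ((1 - RatFunc.X) ^ 3 * RatFunc.C cq) * algebraMap (Polynomial ℚ) (RatFunc ℚ) Bp
      = algebraMap (Polynomial ℚ) (RatFunc ℚ) ((1 - X) ^ 3 * Polynomial.C cq * Bp) := by
    simp only [map_mul, map_pow, map_sub, map_one, RatFunc.algebraMap_X,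
      RatFunc.algebraMap_C]
  rw [h1, h2, ← map_sub, hA]
end
end
end

section
/- Let b, b̄, a, d be non-negative integers with a·d = b + b̄ > 0, and let p > 2 be a prime with gcd(a, p) = 1. Then ∑_{k=1}^{p-1} (-1)^k ((-1)^{d} q^{bk} + q^{b̄k}) / [ak]_q^d ≡ b·(1-q)·[p]_q · ∑_{k=1}^{p-1} (-1)^k q^{b̄k}/[ak]_q^d − a·d·[p]_q · ∑_{k=1}^{p-1} (-1)^k q^{b̄k}/[ak]_q^{d+1} (mod [p]_q^2). -/
open Polynomial Finset

noncomputable section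

lemma sqz_pow {R : Type*} [CommRing R] {v : R} (hv : v*v = 0) (u : R) (n : ℕ) :
    (u + v)^(n+1) = u^(n+1) + (n+1)*u^n*v := by
  induction n with
  | zero => ring
  | succ m ih =>
    have h : (u + v)^(m+1+1) = (u+v)^(m+1) * (u+v) := by ring
    rw [h, ih]
    push_cast
    linear_combination (((m:R)+1) * u^m) * hv

lemma sqz_one_add_pow {R : Type*} [CommRing R] {t : R} (ht : t*t = 0) (c : R) (n : ℕ) :
    (1 + c*t)^n = 1 + n*c*t := by
  induction n with
  | zero => simp
  | succ m ih =>
    rw [pow_succ, ih]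
    push_cast
    linear_combination ((m:R)*c*c) * ht

lemma sqz_mul_pow {R : Type*} [CommRing R] {t : R} (ht : t*t = 0) (c : R) (n : ℕ) :
    t * (1 + c*t)^n = t := by
  rw [sqz_one_add_pow ht c n]
  linear_combination ((n:R)*c) * ht

lemma qIntP_mul_X_sub_one (n : ℕ) : qIntP n * (X - 1) = X^n - 1 := geom_sum_mul X n

lemma X_sub_one_ne : (X - 1 : ℚ[X]) ≠ 0 := by
  intro h
  have := congrArg (Polynomial.eval 0) h
  simp at this

lemma qIntP_add (m n : ℕ) : qIntP (m+n) = qIntP m + X^m * qIntP n := by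
  apply mul_right_cancel₀ X_sub_one_ne
  rw [qIntP_mul_X_sub_one, add_mul, qIntP_mul_X_sub_one, mul_assoc, qIntP_mul_X_sub_one,
    pow_add]
  ring

lemma qIntP_mul (m n : ℕ) : qIntP (m*n) = qIntP n * ∑ i ∈ Finset.range m, (X^n)^i := by
  apply mul_right_cancel₀ X_sub_one_ne
  rw [qIntP_mul_X_sub_one]
  calc (X:ℚ[X])^(m*n) - 1 = (X^n)^m - 1 := by rw [← pow_mul, mul_comm]
    _ = (∑ i ∈ Finset.range m, (X^n)^i) * (X^n - 1) := (geom_sum_mul _ m).symm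
    _ = (∑ i ∈ Finset.range m, (X^n)^i) * (qIntP n * (X - 1)) := by rw [qIntP_mul_X_sub_one]
    _ = qIntP n * (∑ i ∈ Finset.range m, (X^n)^i) * (X - 1) := by ring

lemma qIntP_eval_one (n : ℕ) : (qIntP n).eval 1 = n := by simp [qIntP]

lemma qIntP_ne_zero {n : ℕ} (hn : 0 < n) : qIntP n ≠ 0 := by
  intro h
  have h1 : ((n:ℚ)) = 0 := by rw [← qIntP_eval_one n, h]; simp
  norm_cast at h1
  omega

lemma qIntP_eval_zero (n : ℕ) (hn : 0 < n) : (qIntP n).eval 0 = 1 := by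
  simp [qIntP]
  omega

lemma qIntP_natDegree_le (n : ℕ) : (qIntP n).natDegree ≤ n - 1 := by
  apply Polynomial.natDegree_sum_le_of_forall_le
  intro i hi
  rw [natDegree_X_pow]
  have := Finset.mem_range.mp hi
  omega

lemma qIntP_prime_irreducible {p : ℕ} (hp : p.Prime) : Irreducible (qIntP p) := by
  have : Fact p.Prime := ⟨hp⟩
  have h := Polynomial.cyclotomic_prime ℚ p
  have : qIntP p = Polynomial.cyclotomic p ℚ := by rw [h]; rfl
  rw [this]
  exact Polynomial.cyclotomic.irreducible_rat hp.pos

lemma qIntP_prime_natDegree {p : ℕ} (hp : p.Prime) : (qIntP p).natDegree = p - 1 := by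
  have : Fact p.Prime := ⟨hp⟩
  have h := Polynomial.cyclotomic_prime ℚ p
  have h2 : qIntP p = Polynomial.cyclotomic p ℚ := by rw [h]; rfl
  rw [h2, Polynomial.natDegree_cyclotomic, Nat.totient_prime hp]

lemma qIntP_one : qIntP 1 = 1 := by simp [qIntP]

lemma isCoprime_X_qIntP {p : ℕ} (hp : 0 < p) : IsCoprime (X : ℚ[X]) (qIntP p) := by
  refine ⟨-qIntP (p-1), 1, ?_⟩
  have h : qIntP p = 1 + X * qIntP (p-1) := by
    conv_lhs => rw [show p = 1 + (p-1) by omega]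
    rw [qIntP_add, qIntP_one, pow_one]
  rw [h]; ring

lemma qIntP_not_dvd_X_pow {p : ℕ} (hp : p.Prime) (j : ℕ) : ¬ (qIntP p ∣ X ^ j) := by
  intro h
  have hc : IsCoprime ((X:ℚ[X])^j) (qIntP p) := (isCoprime_X_qIntP hp.pos).pow_left
  exact (qIntP_prime_irreducible hp).not_isUnit (hc.isUnit_of_dvd' h dvd_rfl)

lemma qIntP_not_dvd {p m : ℕ} (hp : p.Prime) (hm : 0 < m) (hpm : ¬ p ∣ m) :
    ¬ (qIntP p ∣ qIntP m) := by
  intro h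
  have hprime : Prime (qIntP p) := (qIntP_prime_irreducible hp).prime
  set r := m % p with hr
  have hr0 : 0 < r := Nat.pos_of_ne_zero (fun h0 => hpm (Nat.dvd_of_mod_eq_zero h0))
  have hrp : r < p := Nat.mod_lt _ hp.pos
  have hm' : m = p * (m / p) + r := by rw [hr]; exact (Nat.div_add_mod m p).symm
  have hsplit : qIntP m = qIntP (p * (m/p)) + X ^ (p * (m/p)) * qIntP r := by
    conv_lhs => rw [hm']
    exact qIntP_add _ _
  have hdvd1 : qIntP p ∣ qIntP (p * (m/p)) := by
    rw [mul_comm, qIntP_mul]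
    exact Dvd.intro _ rfl
  have hdvd2 : qIntP p ∣ X ^ (p * (m/p)) * qIntP r := by
    have h2 : qIntP p ∣ qIntP m - qIntP (p * (m/p)) := dvd_sub h hdvd1
    rw [hsplit] at h2
    simpa using h2
  have hdvd3 : qIntP p ∣ qIntP r :=
    (hprime.dvd_mul.mp hdvd2).resolve_left (qIntP_not_dvd_X_pow hp _)
  have hdeg := Polynomial.natDegree_le_of_dvd hdvd3 (qIntP_ne_zero hr0)
  rw [qIntP_prime_natDegree hp] at hdeg
  have := qIntP_natDegree_le r
  omega

lemma isCoprime_qIntP {p m : ℕ} (hp : p.Prime) (hm : 0 < m) (hpm : ¬ p ∣ m) :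
    IsCoprime (qIntP m) (qIntP p) :=
  (((qIntP_prime_irreducible hp).coprime_iff_not_dvd).mpr (qIntP_not_dvd hp hm hpm)).symm

abbrev RQ := RatFunc ℚ
abbrev amap : ℚ[X] →+* RQ := (algebraMap ℚ[X] (RatFunc ℚ) : ℚ[X] →+* RatFunc ℚ)

lemma qCong_refl (p r : ℕ) (x : RQ) : qCong p r x x :=
  ⟨0, 1, isCoprime_one_left, by simp⟩

lemma qCong_add {p r : ℕ} {x₁ y₁ x₂ y₂ : RQ} (h₁ : qCong p r x₁ y₁)
    (h₂ : qCong p r x₂ y₂) : qCong p r (x₁ + x₂) (y₁ + y₂) := by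
  obtain ⟨a₁, b₁, hb₁, he₁⟩ := h₁
  obtain ⟨a₂, b₂, hb₂, he₂⟩ := h₂
  refine ⟨a₁ * b₂ + a₂ * b₁, b₁ * b₂, hb₁.mul_left hb₂, ?_⟩
  have : (x₁ + x₂ - (y₁ + y₂)) * algebraMap ℚ[X] RQ (b₁ * b₂)
      = (x₁ - y₁) * algebraMap ℚ[X] RQ b₁ * algebraMap ℚ[X] RQ b₂
        + (x₂ - y₂) * algebraMap ℚ[X] RQ b₂ * algebraMap ℚ[X] RQ b₁ := by
    rw [map_mul]; ring
  rw [this, he₁, he₂, ← map_mul, ← map_mul, ← map_add]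
  ring_nf

lemma qCong_sum {p r : ℕ} {s : Finset ℕ} {f g : ℕ → RQ}
    (h : ∀ k ∈ s, qCong p r (f k) (g k)) :
    qCong p r (∑ k ∈ s, f k) (∑ k ∈ s, g k) := by
  classical
  induction s using Finset.induction with
  | empty => simpa using qCong_refl p r 0
  | @insert x s' hx ih =>
    rw [Finset.sum_insert hx, Finset.sum_insert hx]
    exact qCong_add (h x (Finset.mem_insert_self _ _))
      (ih fun k hk => h k (Finset.mem_insert_of_mem hk))

lemma qCong_mul_map {p r : ℕ} (c : ℚ[X]) {x y : RQ} (h : qCong p r x y) :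
    qCong p r (algebraMap ℚ[X] RQ c * x) (algebraMap ℚ[X] RQ c * y) := by
  obtain ⟨a, bb, hb, he⟩ := h
  refine ⟨c * a, bb, hb, ?_⟩
  have : (algebraMap ℚ[X] RQ c * x - algebraMap ℚ[X] RQ c * y) * algebraMap ℚ[X] RQ bb
      = algebraMap ℚ[X] RQ c * ((x - y) * algebraMap ℚ[X] RQ bb) := by ring
  rw [this, he, ← map_mul]
  ring_nf

lemma key_ring {R : Type*} [CommRing R] (s t u P W : R) (a b e : ℕ)
    (ht : t*t = 0) (hP : P = 1 + (b:R)*(s-1)*t) (hW : W = (a:R)*t - u) :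
    -(-1:R)^(e+1) * P * u^(e+2) + u * W^(e+1)
      - (b:R)*(1-s)*t*u*W^(e+1) + (a:R)*((e:R)+1)*t*W^(e+1) = 0 := by
  subst hP hW
  have hv2 : (-((a:R)*t)) * (-((a:R)*t)) = 0 := by linear_combination ((a:R)*(a:R)) * ht
  have hwd : ((a:R)*t - u)^(e+1) = (-1:R)^(e+1)*(u^(e+1) - ((e:R)+1)*(a:R)*t*u^e) := by
    have h5 : ((a:R)*t - u) = -(u + (-((a:R)*t))) := by ring
    rw [h5, neg_pow, sqz_pow hv2 u e]
    ring
  linear_combination (u - (b:R)*(1-s)*t*u + (a:R)*((e:R)+1)*t) * hwd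
    + ((-1:R)^(e+1)*((e:R)+1)*(a:R)*((b:R)*(1-s)*u^(e+1) - ((e:R)+1)*(a:R)*u^e)) * ht

lemma key_dvd (p : ℕ) (hp : p.Prime) (a b k e : ℕ) (hk : k ≤ p) :
    (qIntP p)^2 ∣
      (-(-1:ℚ[X])^(e+1) * X^(b*p) * (qIntP (a*k))^(e+2)
       + qIntP (a*k) * (X^(a*k) * qIntP (a*(p-k)))^(e+1)
       - (b:ℚ[X]) * (1-X) * qIntP p * qIntP (a*k) * (X^(a*k) * qIntP (a*(p-k)))^(e+1)
       + (a:ℚ[X]) * ((e:ℚ[X])+1) * qIntP p * (X^(a*k) * qIntP (a*(p-k)))^(e+1)) := by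
  rw [← Ideal.Quotient.eq_zero_iff_dvd]
  set φ := Ideal.Quotient.mk (Ideal.span {(qIntP p)^2}) with hφ
  simp only [map_add, map_sub, map_mul, map_pow, map_neg, map_one, map_natCast]
  set s := φ X with hs
  set t := φ (qIntP p) with htdef
  set u := φ (qIntP (a*k)) with hu
  set v := φ (qIntP (a*(p-k))) with hv0
  have ht : t * t = 0 := by
    rw [htdef, ← map_mul, Ideal.Quotient.eq_zero_iff_dvd, ← pow_two]
  have hXp : s ^ p = 1 + (s - 1) * t := by
    have h1 : (X:ℚ[X])^p = 1 + (X - 1) * qIntP p := by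
      linear_combination - qIntP_mul_X_sub_one p
    rw [hs, ← map_pow, h1]
    simp only [map_add, map_mul, map_sub, map_one]
    rfl
  have hXbp : s ^ (b*p) = 1 + (b:_)*(s-1)*t := by
    rw [show b*p = p*b by ring, pow_mul, hXp, sqz_one_add_pow ht (s-1) b]
  have hap : φ (qIntP (a*p)) = (a:_) * t := by
    rw [qIntP_mul a p, map_mul, map_sum]
    have heach : ∀ i, φ ((X^p)^i) = (1 + (s-1)*t)^i := by
      intro i; rw [map_pow, map_pow, ← hs, hXp]
    rw [← htdef]
    calc t * ∑ i ∈ Finset.range a, φ ((X^p)^i)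
        = ∑ i ∈ Finset.range a, t * (1 + (s-1)*t)^i := by
          rw [Finset.mul_sum]; exact Finset.sum_congr rfl fun i _ => by rw [heach]
      _ = ∑ i ∈ Finset.range a, t := Finset.sum_congr rfl fun i _ => sqz_mul_pow ht _ i
      _ = (a:_) * t := by rw [Finset.sum_const, Finset.card_range, nsmul_eq_mul]
  have hindex : a*k + a*(p-k) = a*p := by rw [← Nat.left_distrib]; congr 1; omega
  have hsv : s^(a*k) * v = (a:_)*t - u := by
    have h2 : qIntP (a*k) + X^(a*k) * qIntP (a*(p-k)) = qIntP (a*p) := by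
      rw [← qIntP_add, hindex]
    have h3 := congrArg φ h2
    simp only [map_add, map_mul, map_pow] at h3
    rw [← hs, ← hu, ← hv0, hap] at h3
    linear_combination h3
  have := key_ring s t u (s^(b*p)) (s^(a*k)*v) a b e ht hXbp hsv
  linear_combination this

lemma per_term (p : ℕ) (hp : p.Prime) (a b bb k e : ℕ) (hpa : ¬ p ∣ a) (ha : 0 < a)
    (hbd : a*(e+1) = b + bb) (hk1 : 1 ≤ k) (hk2 : k ≤ p - 1) :
    qCong p 2
      (-((-1:RQ)^(e+1) * RatFunc.X^(b*(p-k)) / qN (a*(p-k))^(e+1))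
        + RatFunc.X^(bb*k) / qN (a*k)^(e+1))
      ((b:RQ)*(1-RatFunc.X)*qN p * (RatFunc.X^(bb*k) / qN (a*k)^(e+1))
        - (a:RQ)*((e:RQ)+1)*qN p * (RatFunc.X^(bb*k) / qN (a*k)^(e+2))) := by
  have hp1 : 1 ≤ p := hp.pos
  obtain ⟨m, rfl⟩ : ∃ m, p = k + m := ⟨p - k, by omega⟩
  have hm1 : 1 ≤ m := by omega
  have hmk : k + m - k = m := by omega
  obtain ⟨M, hM⟩ := key_dvd (k+m) hp a b k e (by omega)
  rw [hmk] at hM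
  have hpak : ¬ (k+m) ∣ a*k := by
    intro h
    rcases (Nat.Prime.dvd_mul hp).mp h with h' | h'
    · exact hpa h'
    · have := Nat.le_of_dvd (by omega) h'; omega
  have hpam : ¬ (k+m) ∣ a*m := by
    intro h
    rcases (Nat.Prime.dvd_mul hp).mp h with h' | h'
    · exact hpa h'
    · have := Nat.le_of_dvd (by omega) h'; omega
  refine ⟨M, X^(b*k) * qIntP (a*m)^(e+1) * qIntP (a*k)^(e+2), ?_, ?_⟩
  · exact (((isCoprime_X_qIntP hp.pos).pow_left).mul_left
      ((isCoprime_qIntP hp (by positivity) hpam).pow_left)).mul_left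
      ((isCoprime_qIntP hp (by positivity) hpak).pow_left)
  · have hexp : a*k*(e+1) = b*k + bb*k := by
      rw [show a*k*(e+1) = a*(e+1)*k by ring, hbd, Nat.add_mul]
    rw [mul_pow, ← pow_mul, hexp, pow_add] at hM
    rw [← hM, hmk]
    have hZ : algebraMap ℚ[X] RQ (qIntP (a*k)) ≠ 0 := by
      rw [map_ne_zero_iff _ (RatFunc.algebraMap_injective ℚ)]
      exact qIntP_ne_zero (by positivity)
    have hW : algebraMap ℚ[X] RQ (qIntP (a*m)) ≠ 0 := by
      rw [map_ne_zero_iff _ (RatFunc.algebraMap_injective ℚ)]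
      exact qIntP_ne_zero (by positivity)
    simp only [qN, ← RatFunc.algebraMap_X, map_add, map_sub, map_mul, map_pow, map_neg,
      map_one, map_natCast]
    field_simp
    ring

lemma qCong_neg_pow_mul {p r k : ℕ} {x y : RQ} (h : qCong p r x y) :
    qCong p r ((-1:RQ)^k * x) ((-1:RQ)^k * y) := by
  have h2 := qCong_mul_map ((-1:ℚ[X])^k) h
  simpa using h2

/-- For non-negative integers `b, b̄, a, d` with `a·d = b + b̄ > 0` and a prime
`p > 2` with `gcd(a, p) = 1`:
`∑_{k=1}^{p-1} (-1)^k ((-1)^d q^{bk} + q^{b̄k})/[ak]_q^d ≡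
  b(1-q)[p]_q ∑_{k=1}^{p-1} (-1)^k q^{b̄k}/[ak]_q^d
    − ad[p]_q ∑_{k=1}^{p-1} (-1)^k q^{b̄k}/[ak]_q^{d+1} (mod [p]_q²)`. -/
theorem qHneg (b bb a d : ℕ) (hbd : a * d = b + bb) (hpos : 0 < b + bb)
    (p : ℕ) (hp : p.Prime) (hp2 : 2 < p) (hap : Nat.gcd a p = 1) :
    qCong p 2
      (∑ k ∈ Finset.Icc 1 (p - 1),
        (-1 : RatFunc ℚ) ^ k *
          ((-1 : RatFunc ℚ) ^ d * RatFunc.X ^ (b * k) + RatFunc.X ^ (bb * k)) /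
            qN (a * k) ^ d)
      ((b : RatFunc ℚ) * (1 - RatFunc.X) * qN p *
          ∑ k ∈ Finset.Icc 1 (p - 1),
            (-1 : RatFunc ℚ) ^ k * RatFunc.X ^ (bb * k) / qN (a * k) ^ d
        - (a : RatFunc ℚ) * (d : RatFunc ℚ) * qN p *
          ∑ k ∈ Finset.Icc 1 (p - 1),
            (-1 : RatFunc ℚ) ^ k * RatFunc.X ^ (bb * k) / qN (a * k) ^ (d + 1)) := by

  -- basic facts
  have ha : 0 < a := by
    rcases Nat.eq_zero_or_pos a with h | h
    · rw [h] at hbd; simp at hbd; omega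
    · exact h
  obtain ⟨e, rfl⟩ : ∃ e, d = e + 1 := by
    rcases Nat.eq_zero_or_pos d with h | h
    · rw [h] at hbd; simp at hbd; omega
    · exact ⟨d - 1, by omega⟩
  have hbd' : a * (e+1) = b + bb := hbd
  have hpa : ¬ p ∣ a := by
    intro h
    have h2 : p ∣ Nat.gcd a p := Nat.dvd_gcd h dvd_rfl
    rw [hap] at h2
    have h3 := Nat.le_of_dvd one_pos h2
    omega
  have hsign : ∀ k ∈ Finset.Icc 1 (p-1), ((-1:RQ)^(p-k)) = -(-1)^k := by
    intro k hk
    rw [Finset.mem_Icc] at hk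
    have h1 : (-1:RQ)^(p-k) = (-1)^(p-k) * ((-1)^2)^k := by norm_num
    rw [h1, ← pow_mul, ← pow_add, show p - k + 2*k = p + k by omega, pow_add,
      Odd.neg_one_pow (hp.odd_of_ne_two (by omega))]
    ring
  have hL : (∑ k ∈ Finset.Icc 1 (p - 1),
        (-1 : RQ) ^ k * ((-1 : RQ) ^ (e+1) * RatFunc.X ^ (b * k) + RatFunc.X ^ (bb * k)) /
          qN (a * k) ^ (e+1))
      = ∑ k ∈ Finset.Icc 1 (p-1), (-1:RQ)^k *
          (-((-1:RQ)^(e+1) * RatFunc.X^(b*(p-k)) / qN (a*(p-k))^(e+1))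
            + RatFunc.X^(bb*k) / qN (a*k)^(e+1)) := by
    calc ∑ k ∈ Finset.Icc 1 (p - 1),
        (-1 : RQ) ^ k * ((-1 : RQ) ^ (e+1) * RatFunc.X ^ (b * k) + RatFunc.X ^ (bb * k)) /
          qN (a * k) ^ (e+1)
        = ∑ k ∈ Finset.Icc 1 (p-1),
            ((-1:RQ)^k * ((-1:RQ)^(e+1) * RatFunc.X^(b*k) / qN (a*k)^(e+1))
              + (-1:RQ)^k * (RatFunc.X^(bb*k) / qN (a*k)^(e+1))) :=
          Finset.sum_congr rfl fun k _ => by ring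
      _ = (∑ k ∈ Finset.Icc 1 (p-1),
            (-1:RQ)^k * ((-1:RQ)^(e+1) * RatFunc.X^(b*k) / qN (a*k)^(e+1)))
          + ∑ k ∈ Finset.Icc 1 (p-1), (-1:RQ)^k * (RatFunc.X^(bb*k) / qN (a*k)^(e+1)) :=
          Finset.sum_add_distrib
      _ = (∑ k ∈ Finset.Icc 1 (p-1),
            (-1:RQ)^k * (-((-1:RQ)^(e+1) * RatFunc.X^(b*(p-k)) / qN (a*(p-k))^(e+1))))
          + ∑ k ∈ Finset.Icc 1 (p-1), (-1:RQ)^k * (RatFunc.X^(bb*k) / qN (a*k)^(e+1)) := by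
          congr 1
          refine Finset.sum_nbij' (fun k => p - k) (fun k => p - k) ?_ ?_ ?_ ?_ ?_
          · intro k hk; simp only [Finset.mem_Icc] at hk ⊢; omega
          · intro k hk; simp only [Finset.mem_Icc] at hk ⊢; omega
          · intro k hk; simp only [Finset.mem_Icc] at hk; show p - (p - k) = k; omega
          · intro k hk; simp only [Finset.mem_Icc] at hk; show p - (p - k) = k; omega
          · intro k hk
            have h2 : p - (p - k) = k := by rw [Finset.mem_Icc] at hk; omega
            rw [h2, hsign k hk]
            ring
      _ = ∑ k ∈ Finset.Icc 1 (p-1), (-1:RQ)^k *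
          (-((-1:RQ)^(e+1) * RatFunc.X^(b*(p-k)) / qN (a*(p-k))^(e+1))
            + RatFunc.X^(bb*k) / qN (a*k)^(e+1)) := by
          rw [← Finset.sum_add_distrib]
          exact Finset.sum_congr rfl fun k _ => by ring
  have hR : ((b : RQ) * (1 - RatFunc.X) * qN p *
          ∑ k ∈ Finset.Icc 1 (p - 1),
            (-1 : RQ) ^ k * RatFunc.X ^ (bb * k) / qN (a * k) ^ (e+1)
        - (a : RQ) * ((e+1 : ℕ) : RQ) * qN p *
          ∑ k ∈ Finset.Icc 1 (p - 1),
            (-1 : RQ) ^ k * RatFunc.X ^ (bb * k) / qN (a * k) ^ ((e+1) + 1))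
      = ∑ k ∈ Finset.Icc 1 (p-1), (-1:RQ)^k *
          ((b:RQ)*(1-RatFunc.X)*qN p * (RatFunc.X^(bb*k) / qN (a*k)^(e+1))
            - (a:RQ)*((e:RQ)+1)*qN p * (RatFunc.X^(bb*k) / qN (a*k)^(e+2))) := by
    rw [Finset.mul_sum, Finset.mul_sum, ← Finset.sum_sub_distrib]
    refine Finset.sum_congr rfl fun k _ => by push_cast; ring
  rw [hL, hR]
  exact qCong_sum fun k hk => by
    rw [Finset.mem_Icc] at hk
    exact qCong_neg_pow_mul (per_term p hp a b bb k e hpa ha hbd' hk.1 hk.2)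
end
end
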